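/- The number of monic polynomials of degree n over F_p with index at least k is O_n(p^{n−k}); equivalently, the fraction of monic degree-n polynomials over F_p with index ≥ k is at most C(n)·p^{−k} for a constant C(n) depending only on n. -/

import Mathlib

open Polynomial UniqueFactorizationMonoid

/-- The index of a polynomial `f = ∏ fᵢ^{eᵢ}` over a field:
`ind f = deg f - Σᵢ deg fᵢ = Σᵢ (eᵢ - 1) deg fᵢ`, summing over the distinct monic
irreducible factors `fᵢ` of `f`. -/
noncomputable def polyIndex {K : Type*} [Field K] [DecidableEq K] (f : K[X]) : ℕ :=
  f.natDegree - ((normalizedFactors f).toFinset.sum fun g => g.natDegree)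


section Aux

variable {K : Type*} [Field K] [DecidableEq K]

lemma monic_of_nf {f q : K[X]} (hq : q ∈ normalizedFactors f) : q.Monic := by
  have h1 : normalize q = q := normalize_normalized_factor q hq
  have h2 : q ≠ 0 := (irreducible_of_normalized_factor q hq).ne_zero
  rw [← h1]; exact monic_normalize h2

lemma prod_nf {f : K[X]} (hf : f.Monic) : (normalizedFactors f).prod = f := by
  refine eq_of_monic_of_associated ?_ hf (prod_normalizedFactors hf.ne_zero)
  have := monic_multiset_prod_of_monic (normalizedFactors f) id
    (fun q hq => monic_of_nf hq)
  simpa using this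

lemma sum_nf_deg {f : K[X]} (hf : f.Monic) :
    ((normalizedFactors f).map natDegree).sum = f.natDegree := by
  conv_rhs => rw [← prod_nf hf]
  rw [natDegree_multiset_prod_of_monic _ (fun q hq => monic_of_nf hq)]

lemma card_nf_le {f : K[X]} (hf : f.Monic) :
    Multiset.card (normalizedFactors f) ≤ f.natDegree := by
  rw [← sum_nf_deg hf]
  have h := Multiset.card_nsmul_le_sum
    (s := (normalizedFactors f).map natDegree) (a := 1) ?_
  · simpa using h
  · intro x hx
    obtain ⟨q, hq, rfl⟩ := Multiset.mem_map.mp hx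
    exact (irreducible_of_normalized_factor q hq).natDegree_pos

lemma msum_mono {s t : Multiset ℕ} (h : s ≤ t) : s.sum ≤ t.sum := by
  obtain ⟨u, rfl⟩ := Multiset.le_iff_exists_add.mp h
  simp

lemma dedup_deg_sum_le {f : K[X]} (hf : f.Monic) :
    ((normalizedFactors f).toFinset.sum fun g => g.natDegree) ≤ f.natDegree := by
  rw [← sum_nf_deg hf]
  have : ((normalizedFactors f).toFinset.sum fun g => g.natDegree)
      = ((normalizedFactors f).dedup.map natDegree).sum := rfl
  rw [this]
  exact msum_mono (Multiset.map_le_map (Multiset.dedup_le _))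

/-- the "radical" of `f`. -/
noncomputable def myRad (f : K[X]) : K[X] := (normalizedFactors f).toFinset.prod id

lemma myRad_monic (f : K[X]) : (myRad f).Monic :=
  monic_prod_of_monic _ _ (fun q hq => monic_of_nf (Multiset.mem_toFinset.mp hq))

lemma myRad_natDegree (f : K[X]) :
    (myRad f).natDegree = ((normalizedFactors f).toFinset.sum fun g => g.natDegree) :=
  natDegree_prod_of_monic _ _ (fun q hq => monic_of_nf (Multiset.mem_toFinset.mp hq))

lemma nf_myRad (f : K[X]) :
    normalizedFactors (myRad f) = (normalizedFactors f).dedup := by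
  have h1 : myRad f = ((normalizedFactors f).dedup).prod := by
    rw [myRad, Finset.prod, Multiset.toFinset_val, Multiset.map_id]
  rw [h1, normalizedFactors_prod_eq _ (fun q hq =>
    irreducible_of_normalized_factor q (Multiset.mem_dedup.mp hq))]
  rw [Multiset.map_congr rfl (fun q hq =>
    normalize_normalized_factor q (Multiset.mem_dedup.mp hq))]
  simp

lemma nf_le_nsmul {f : K[X]} (hf : f.Monic) {n : ℕ} (hn : f.natDegree ≤ n) :
    normalizedFactors f ≤ n • normalizedFactors (myRad f) := by
  rw [nf_myRad, Multiset.le_iff_count]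
  intro a
  rw [Multiset.count_nsmul, Multiset.count_dedup]
  by_cases ha : a ∈ normalizedFactors f
  · simp only [ha, if_true, mul_one]
    exact le_trans (le_trans (Multiset.count_le_card a _) (card_nf_le hf)) hn
  · simp [Multiset.count_eq_zero_of_notMem ha]

end Aux

lemma monic_set_finite (F : Type*) [Field F] [Finite F] (d : ℕ) :
    {g : F[X] | g.Monic ∧ g.natDegree ≤ d}.Finite := by
  have : Finite (Fin (d+1) × (Fin d → F)) := by infer_instance
  rw [← Set.finite_coe_iff]
  refine Finite.of_injective (fun g : {g : F[X] | g.Monic ∧ g.natDegree ≤ d} =>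
    ((⟨g.1.natDegree, by have := g.2.2; omega⟩ : Fin (d+1)), fun i : Fin d => g.1.coeff i)) ?_
  rintro ⟨g, hg, hgd⟩ ⟨g', hg', hgd'⟩ h
  simp only [Prod.mk.injEq, Fin.mk.injEq] at h
  obtain ⟨hdeg, hcoeff⟩ := h
  ext1
  ext i
  rcases lt_trichotomy i g.natDegree with hi | hi | hi
  · exact congrFun hcoeff ⟨i, lt_of_lt_of_le hi hgd⟩
  · subst hi
    rw [hg.coeff_natDegree, hdeg, hg'.coeff_natDegree]
  · rw [coeff_eq_zero_of_natDegree_lt hi,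
      coeff_eq_zero_of_natDegree_lt (hdeg ▸ hi)]

lemma card_monic_le (F : Type*) [Field F] [Fintype F] (d : ℕ) :
    Nat.card {g : F[X] | g.Monic ∧ g.natDegree ≤ d} ≤ (d+1) * Fintype.card F ^ d := by
  have hcard : Nat.card (Fin (d+1) × (Fin d → F)) = (d+1) * Fintype.card F ^ d := by
    simp [Nat.card_eq_fintype_card]
  rw [← hcard]
  refine Nat.card_le_card_of_injective (fun g : {g : F[X] | g.Monic ∧ g.natDegree ≤ d} =>
    ((⟨g.1.natDegree, by have := g.2.2; omega⟩ : Fin (d+1)), fun i : Fin d => g.1.coeff i)) ?_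
  rintro ⟨g, hg, hgd⟩ ⟨g', hg', hgd'⟩ h
  simp only [Prod.mk.injEq, Fin.mk.injEq] at h
  obtain ⟨hdeg, hcoeff⟩ := h
  ext1
  ext i
  rcases lt_trichotomy i g.natDegree with hi | hi | hi
  · exact congrFun hcoeff ⟨i, lt_of_lt_of_le hi hgd⟩
  · subst hi
    rw [hg.coeff_natDegree, hdeg, hg'.coeff_natDegree]
  · rw [coeff_eq_zero_of_natDegree_lt hi,
      coeff_eq_zero_of_natDegree_lt (hdeg ▸ hi)]

/-- The number of monic polynomials of degree `n` over `F_p` with index at least `k`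
is `O_n(p^{n-k})`: at most `C(n) · p^{n-k}` for a constant `C(n)` depending only on `n`. -/
theorem stmt5 (n : ℕ) : ∃ C : ℕ, 0 < C ∧ ∀ (p : ℕ) [Fact p.Prime] (k : ℕ),
    Nat.card {f : (ZMod p)[X] | f.Monic ∧ f.natDegree = n ∧ k ≤ polyIndex f} ≤
      C * p ^ (n - k) := by
  refine ⟨(n+1) * 2 ^ (n*n), by positivity, ?_⟩
  intro p hp k
  haveI : NeZero p := ⟨hp.out.ne_zero⟩
  set K := ZMod p
  set S : Set K[X] := {f | f.Monic ∧ f.natDegree = n ∧ k ≤ polyIndex f} with hS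
  set d := n - k with hd
  have hRfin := monic_set_finite K d
  set Rfin : Finset K[X] := hRfin.toFinset with hRf
  set T : Finset (K[X] × Multiset K[X]) :=
    Rfin.biUnion (fun r => ((n • normalizedFactors r).powerset.toFinset).image
      (fun s => (r, s))) with hT
  -- facts about members of S
  have hmem : ∀ f ∈ S, (myRad f, normalizedFactors f) ∈ T := by
    rintro f ⟨hf, hfn, hfk⟩
    have hsum : ((normalizedFactors f).toFinset.sum fun g => g.natDegree) ≤ n := by
      have := dedup_deg_sum_le hf; omega
    have hsumd : ((normalizedFactors f).toFinset.sum fun g => g.natDegree) ≤ d := by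
      have hfk' : k ≤ n - ((normalizedFactors f).toFinset.sum fun g => g.natDegree) := by
        rw [polyIndex, hfn] at hfk; exact hfk
      omega
    have hrad : myRad f ∈ Rfin := by
      rw [hRf, Set.Finite.mem_toFinset]
      exact ⟨myRad_monic f, by rw [myRad_natDegree]; exact hsumd⟩
    rw [hT, Finset.mem_biUnion]
    refine ⟨myRad f, hrad, ?_⟩
    rw [Finset.mem_image]
    refine ⟨normalizedFactors f, ?_, rfl⟩
    rw [Multiset.mem_toFinset, Multiset.mem_powerset]
    exact nf_le_nsmul hf (le_of_eq hfn)
  -- injection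
  have hcardle : Nat.card S ≤ T.card := by
    rw [← Nat.card_eq_finsetCard]
    refine Nat.card_le_card_of_injective
      (fun f : S => (⟨(myRad f.1, normalizedFactors f.1), hmem f.1 f.2⟩ : {x // x ∈ T})) ?_
    rintro ⟨f, hf⟩ ⟨f', hf'⟩ h
    simp only [Subtype.mk.injEq, Prod.mk.injEq] at h
    refine Subtype.ext ?_
    show f = f'
    rw [← prod_nf hf.1, ← prod_nf hf'.1, h.2]
  -- count T
  have hTcard : T.card ≤ Rfin.card * 2 ^ (n*n) := by
    refine le_trans (Finset.card_biUnion_le) ?_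
    refine le_trans (Finset.sum_le_card_nsmul _ _ (2 ^ (n*n)) ?_) (by rw [smul_eq_mul])
    intro r hr
    refine le_trans (Finset.card_image_le) ?_
    refine le_trans (Multiset.toFinset_card_le _) ?_
    rw [Multiset.card_powerset, Multiset.card_nsmul]
    refine Nat.pow_le_pow_right (by norm_num) ?_
    refine Nat.mul_le_mul le_rfl ?_
    rw [hRf, Set.Finite.mem_toFinset] at hr
    exact le_trans (card_nf_le hr.1) (le_trans hr.2 (by omega))
  have hRcard : Rfin.card ≤ (d+1) * p ^ d := by
    have h1 : Rfin.card = Nat.card {g : K[X] | g.Monic ∧ g.natDegree ≤ d} := by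
      rw [Nat.card_coe_set_eq, Set.ncard_eq_toFinset_card _ hRfin]
    rw [h1]
    have := card_monic_le K d
    rwa [ZMod.card p] at this
  calc Nat.card S ≤ T.card := hcardle
    _ ≤ Rfin.card * 2 ^ (n*n) := hTcard
    _ ≤ ((d+1) * p ^ d) * 2 ^ (n*n) := Nat.mul_le_mul_right _ hRcard
    _ ≤ (n+1) * 2 ^ (n*n) * p ^ (n-k) := by
        rw [hd]
        have h1 : n - k + 1 ≤ n + 1 := by omega
        calc (n - k + 1) * p ^ (n - k) * 2 ^ (n*n)
            = (n - k + 1) * (2 ^ (n*n) * p ^ (n - k)) := by ring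
          _ ≤ (n + 1) * (2 ^ (n*n) * p ^ (n - k)) := Nat.mul_le_mul_right _ h1
          _ = (n + 1) * 2 ^ (n*n) * p ^ (n - k) := by ring
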